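/- Let A, G be n×n complex matrices with G Hermitian, B an n×m complex matrix, and Γ a positive definite Hermitian m×m complex matrix. Then for every Hermitian n×n matrix H, the following are equivalent: (i) for all (x, ξ) ∈ ℂⁿ × ℂᵐ with (x, ξ) ≠ 0, one has 2·Re(x*·H·(A·x + B·ξ)) + x*·G·x - ξ*·Γ·ξ < 0; (ii) H·A + A*·H + G + H·B·Γ⁻¹·B*·H ≺ 0 (negative definite). -/

import Mathlib

open Matrix
open scoped ComplexOrder

private lemma star_quad {p q : ℕ} (M : Matrix (Fin p) (Fin q) ℂ) (a : Fin p → ℂ)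
    (b : Fin q → ℂ) :
    star (star a ⬝ᵥ (M *ᵥ b)) = (star b ᵥ* Mᴴ) ⬝ᵥ a := by
  rw [← star_dotProduct, star_mulVec]

private lemma star_quad' {p q : ℕ} (M : Matrix (Fin p) (Fin q) ℂ) (a : Fin p → ℂ)
    (b : Fin q → ℂ) :
    star ((star a ᵥ* M) ⬝ᵥ b) = (star b ᵥ* Mᴴ) ⬝ᵥ a := by
  rw [← Matrix.dotProduct_mulVec, ← star_dotProduct, star_mulVec]

private lemma herm_dot_im {k : ℕ} {M : Matrix (Fin k) (Fin k) ℂ} (hM : M.IsHermitian)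
    (x : Fin k → ℂ) : (star x ⬝ᵥ (M *ᵥ x)).im = 0 := by
  have h : star (star x ⬝ᵥ (M *ᵥ x)) = star x ⬝ᵥ (M *ᵥ x) := by
    rw [star_quad, hM.eq, ← Matrix.dotProduct_mulVec]
  have h2 := congrArg Complex.im h
  simp only [Complex.star_def, Complex.conj_im] at h2
  linarith

/-- For positive definite `Γ`, the quadratic-form condition
`2·Re(x*H(Ax+Bξ)) + x*Gx - ξ*Γξ < 0` for all nonzero `(x, ξ)` is equivalent to
the Riccati inequality `H·A + A*·H + G + H·B·Γ⁻¹·B*·H ≺ 0`. -/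
theorem quadratic_form_iff_riccati (n m : ℕ) (hn : 0 < n) (hm : 0 < m)
    (A G : Matrix (Fin n) (Fin n) ℂ) (B : Matrix (Fin n) (Fin m) ℂ)
    (Γ : Matrix (Fin m) (Fin m) ℂ) (hG : G.IsHermitian) (hΓ : Γ.PosDef)
    (H : Matrix (Fin n) (Fin n) ℂ) (hH : H.IsHermitian) :
    (∀ (x : Fin n → ℂ) (ξ : Fin m → ℂ), ¬(x = 0 ∧ ξ = 0) →
        2 * (star x ⬝ᵥ (H *ᵥ (A *ᵥ x + B *ᵥ ξ))).re
          + (star x ⬝ᵥ (G *ᵥ x)).re - (star ξ ⬝ᵥ (Γ *ᵥ ξ)).re < 0) ↔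
      (-(H * A + Aᴴ * H + G + H * B * Γ⁻¹ * Bᴴ * H)).PosDef := by
  classical
  set R := H * A + Aᴴ * H + G + H * B * Γ⁻¹ * Bᴴ * H with hRdef
  have hΓd : IsUnit Γ.det := (Matrix.isUnit_iff_isUnit_det Γ).1 hΓ.isUnit
  have hΓΓi : Γ * Γ⁻¹ = 1 := Matrix.mul_nonsing_inv Γ hΓd
  have hΓiΓ : Γ⁻¹ * Γ = 1 := Matrix.nonsing_inv_mul Γ hΓd
  have hΓiH : (Γ⁻¹)ᴴ = Γ⁻¹ := hΓ.1.inv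
  have hc1 : ∀ (Z : Matrix (Fin m) (Fin n) ℂ), Γ * (Γ⁻¹ * Z) = Z := fun Z => by
    rw [← Matrix.mul_assoc, hΓΓi, Matrix.one_mul]
  have hc2 : ∀ (Z : Matrix (Fin m) (Fin n) ℂ), Γ⁻¹ * (Γ * Z) = Z := fun Z => by
    rw [← Matrix.mul_assoc, hΓiΓ, Matrix.one_mul]
  have hRH : R.IsHermitian := by
    have : Rᴴ = R := by
      simp only [hRdef, conjTranspose_add, conjTranspose_mul,
        conjTranspose_conjTranspose, hH.eq, hG.eq, hΓiH, Matrix.mul_assoc]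
      abel
    exact this
  have key : ∀ (x : Fin n → ℂ) (ξ : Fin m → ℂ),
      (2 * (star x ⬝ᵥ (H *ᵥ (A *ᵥ x + B *ᵥ ξ))).re
        + (star x ⬝ᵥ (G *ᵥ x)).re - (star ξ ⬝ᵥ (Γ *ᵥ ξ)).re : ℝ)
      = (star x ⬝ᵥ (R *ᵥ x)).re
        - (star (ξ - (Γ⁻¹ * Bᴴ * H) *ᵥ x) ⬝ᵥ (Γ *ᵥ (ξ - (Γ⁻¹ * Bᴴ * H) *ᵥ x))).re := by
    intro x ξ
    have hiden : star x ⬝ᵥ (H *ᵥ (A *ᵥ x + B *ᵥ ξ))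
          + star (star x ⬝ᵥ (H *ᵥ (A *ᵥ x + B *ᵥ ξ)))
          + star x ⬝ᵥ (G *ᵥ x) - star ξ ⬝ᵥ (Γ *ᵥ ξ)
        = star x ⬝ᵥ (R *ᵥ x)
          - star (ξ - (Γ⁻¹ * Bᴴ * H) *ᵥ x) ⬝ᵥ (Γ *ᵥ (ξ - (Γ⁻¹ * Bᴴ * H) *ᵥ x)) := by
      simp only [hRdef, Matrix.mulVec_add, Matrix.mulVec_sub, Matrix.mulVec_mulVec,
        Matrix.add_mulVec, Matrix.sub_mulVec, dotProduct_add, dotProduct_sub,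
        add_dotProduct, sub_dotProduct, star_add, star_sub, star_dotProduct, star_star,
        Matrix.star_mulVec, Matrix.dotProduct_mulVec, Matrix.vecMul_vecMul,
        Matrix.conjTranspose_mul, Matrix.conjTranspose_conjTranspose, hH.eq, hG.eq,
        hΓiH, hΓ.1.eq, Matrix.add_vecMul, Matrix.sub_vecMul, Matrix.mul_assoc,
        hc1, hc2, hΓΓi, hΓiΓ, Matrix.mul_one, Matrix.one_mul, star_quad, star_quad']
      ring
    have h2 := congrArg Complex.re hiden
    simp only [Complex.add_re, Complex.sub_re, Complex.star_def, Complex.conj_re] at h2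
    linarith
  constructor
  · intro h
    refine Matrix.PosDef.of_dotProduct_mulVec_pos hRH.neg (fun x hx => ?_)
    have hq := h x ((Γ⁻¹ * Bᴴ * H) *ᵥ x) (by simp [hx])
    rw [key] at hq
    simp only [sub_self, Matrix.mulVec_zero, dotProduct_zero, star_zero,
      zero_dotProduct, Complex.zero_re, sub_zero] at hq
    rw [Complex.lt_def]
    constructor
    · simpa [Matrix.neg_mulVec, Complex.neg_re] using hq
    · exact ((herm_dot_im hRH.neg x)).symm
  · intro h x ξ hxξ
    rw [key]
    by_cases hx : x = 0
    · have hξ : ξ ≠ 0 := fun hξ => hxξ ⟨hx, hξ⟩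
      have := hΓ.re_dotProduct_pos hξ
      simp only [hx, star_zero, Matrix.mulVec_zero, zero_dotProduct, dotProduct_zero,
        Complex.zero_re, sub_zero, zero_sub, neg_neg, sub_self] at *
      simpa using this
    · have h1 := (h.dotProduct_mulVec_pos hx)
      rw [Complex.lt_def] at h1
      have h1' : (star x ⬝ᵥ (R *ᵥ x)).re < 0 := by
        have := h1.1
        simp only [Matrix.neg_mulVec, dotProduct_neg, Complex.neg_re, Complex.zero_re] at this
        linarith
      have h2 : 0 ≤ (star (ξ - (Γ⁻¹ * Bᴴ * H) *ᵥ x) ⬝ᵥ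
          (Γ *ᵥ (ξ - (Γ⁻¹ * Bᴴ * H) *ᵥ x))).re :=
        hΓ.posSemidef.re_dotProduct_nonneg _
      linarith
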